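/- Fix c ∈ [−1,1] and ω ∈ ℝ. Then, as h → 0⁺, (Q̂₁(hω; h) + ω²)/h⁴ converges to (4 + 13c)ω⁶/(2880(2 − c)); i.e. the principal symbol satisfies Q̂₁(hω; h) = −ω² + (4+13c)ω⁶h⁴/(2880(2−c)) + o(h⁴). -/

import Mathlib

open Filter Topology

/-- `Ω(θ) = −cos(θ/2)(16 − (7 + cos θ)c)`. -/
noncomputable def Om (c θ : ℝ) : ℝ :=
  -Real.cos (θ/2) * (16 - (7 + Real.cos θ)*c)

/-- `Δ(θ) = √(Ω(θ)² + 4c² sin⁶(θ/2))`. -/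
noncomputable def Del (c θ : ℝ) : ℝ :=
  Real.sqrt ((Om c θ)^2 + 4*c^2*(Real.sin (θ/2))^6)

/-- The principal symbol `Q̂₁(θ; h)`. -/
noncomputable def Qhat1 (c h θ : ℝ) : ℝ :=
  (2/(3*h^2)) * (-(15 + Real.cos θ) + (5 + 3*Real.cos θ)*c + Del c θ)

/-- The spurious symbol `Q̂₂(θ; h)`. -/
noncomputable def Qhat2 (c h θ : ℝ) : ℝ :=
  (2/(3*h^2)) * (-(15 + Real.cos θ) + (5 + 3*Real.cos θ)*c - Del c θ)

/-! ### Auxiliary definitions for the Taylor expansion -/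

/-- Degree-6 Taylor polynomial of `cos`. -/
noncomputable def C6 (x : ℝ) : ℝ := 1 - x^2/2 + x^4/24 - x^6/720

/-- The radicand of `Del` as a polynomial in `y = cos θ`. -/
noncomputable def Apoly (c y : ℝ) : ℝ :=
  (1+y)/2*(16-(7+y)*c)^2 + c^2/2*(1-y)^3

/-- Degree-6 Taylor polynomial of `Del`. -/
noncomputable def Ppoly (c θ : ℝ) : ℝ :=
  (16-8*c) - (4-3*c)/2*θ^2 + (1-3*c)/24*θ^4
    + ((-1/1440) + (19/1152)*c - (1/240)*c^2)/(2-c)*θ^6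

/-- The explicit remainder polynomial with `Apoly c (C6 θ) - (Ppoly c θ)^2 = θ^8 * Wpoly c θ`. -/
noncomputable def Wpoly (c θ : ℝ) : ℝ :=
  ((-1/80) + (-1/80)*c + (1/160)*c^2 + (1/640)*c^3)/(2-c)^2
  + (((1/8640) + (49/11520)*c + (-5/4608)*c^2 + (-37/69120)*c^3)/(2-c)^2)*θ^2
  + (((-1/2073600) + (-139/1382400)*c + (-313/3686400)*c^2 + (77/2073600)*c^3)/(2-c)^2)*θ^4

open Finset Complex in
lemma sum8 (x : ℝ) : (∑ m ∈ range 8, ((x:ℂ)*I)^m/m.factorial)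
    + (∑ m ∈ range 8, (-((x:ℂ)*I))^m/m.factorial)
    = 2*(1 - (x:ℂ)^2/2 + x^4/24 - x^6/720) := by
  have h6 : (I:ℂ)^6 = -1 := by
    rw [show (6:ℕ) = 2*3 by norm_num, pow_mul, I_sq]; norm_num
  have h4 : (I:ℂ)^4 = 1 := I_pow_four
  simp [Finset.sum_range_succ, Nat.factorial]
  ring_nf
  rw [h6, h4, I_sq]; ring

open Finset Complex in
lemma cos_taylor6 {x : ℝ} (hx : |x| ≤ 1) :
    |Real.cos x - C6 x| ≤ |x|^8 := by
  have key : ‖Complex.cos x - ((1:ℂ) - (x:ℂ)^2/2 + x^4/24 - x^6/720)‖ ≤ |x|^8 := by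
    have hxc : ‖(x:ℂ)*I‖ ≤ 1 := by simpa using hx
    have hxc' : ‖-((x:ℂ)*I)‖ ≤ 1 := by simpa using hx
    have b1 := Complex.exp_bound hxc (n := 8) (by norm_num)
    have b2 := Complex.exp_bound hxc' (n := 8) (by norm_num)
    have hcos : Complex.cos x - ((1:ℂ) - (x:ℂ)^2/2 + x^4/24 - x^6/720)
        = ((Complex.exp ((x:ℂ)*I) - ∑ m ∈ range 8, ((x:ℂ)*I)^m/m.factorial)
          + (Complex.exp (-((x:ℂ)*I)) - ∑ m ∈ range 8, (-((x:ℂ)*I))^m/m.factorial))/2 := by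
      rw [Complex.cos]
      simp only [neg_mul]
      have := sum8 x
      linear_combination this/2
    rw [hcos]
    have habs : ‖((Complex.exp ((x:ℂ)*I) - ∑ m ∈ range 8, ((x:ℂ)*I)^m/m.factorial)
          + (Complex.exp (-((x:ℂ)*I)) - ∑ m ∈ range 8, (-((x:ℂ)*I))^m/m.factorial))/2‖
        ≤ (‖Complex.exp ((x:ℂ)*I) - ∑ m ∈ range 8, ((x:ℂ)*I)^m/m.factorial‖
          + ‖Complex.exp (-((x:ℂ)*I)) - ∑ m ∈ range 8, (-((x:ℂ)*I))^m/m.factorial‖)/2 := by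
      rw [norm_div, Complex.norm_two]
      gcongr
      exact norm_add_le _ _
    refine habs.trans ?_
    have e1 : ‖(x:ℂ)*I‖ = |x| := by simp
    have e2 : ‖-((x:ℂ)*I)‖ = |x| := by simp
    rw [e1] at b1; rw [e2] at b2
    have hsum : (‖Complex.exp ((x:ℂ)*I) - ∑ m ∈ range 8, ((x:ℂ)*I)^m/m.factorial‖
          + ‖Complex.exp (-((x:ℂ)*I)) - ∑ m ∈ range 8, (-((x:ℂ)*I))^m/m.factorial‖)/2
        ≤ (|x|^8 * ((Nat.succ 8 : ℝ) * ((Nat.factorial 8 : ℝ) * (8:ℝ))⁻¹)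
          + |x|^8 * ((Nat.succ 8 : ℝ) * ((Nat.factorial 8 : ℝ) * (8:ℝ))⁻¹))/2 := by
      gcongr
      · exact b1.trans_eq (by push_cast; ring)
      · exact b2.trans_eq (by push_cast; ring)
    refine hsum.trans ?_
    have h8 : (Nat.factorial 8 : ℝ) = 40320 := by norm_num [Nat.factorial]
    rw [h8]
    nlinarith [pow_nonneg (abs_nonneg x) 8]
  calc |Real.cos x - C6 x|
      = ‖Complex.cos x - ((1:ℂ) - (x:ℂ)^2/2 + x^4/24 - x^6/720)‖ := by
        rw [← Real.norm_eq_abs, ← Complex.norm_real]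
        norm_num [Complex.ofReal_cos, C6]
    _ ≤ |x|^8 := key

/-- The radicand of `Del` is `Apoly` evaluated at `cos θ`. -/
lemma radicand_eq (c θ : ℝ) :
    (Om c θ)^2 + 4*c^2*(Real.sin (θ/2))^6 = Apoly c (Real.cos θ) := by
  have hcos : Real.cos (θ/2)^2 = 1/2 + Real.cos θ/2 := by
    rw [Real.cos_sq]; norm_num [mul_div_cancel₀]
  have hsin : Real.sin (θ/2)^2 = 1 - (1/2 + Real.cos θ/2) := by
    rw [← hcos, Real.sin_sq]
  have h1 : (Om c θ)^2 = Real.cos (θ/2)^2 * (16 - (7 + Real.cos θ)*c)^2 := by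
    unfold Om; ring
  have h2 : (Real.sin (θ/2))^6 = (Real.sin (θ/2)^2)^3 := by ring
  rw [h1, h2, hcos, hsin]
  unfold Apoly; ring

lemma radicand_nonneg (c θ : ℝ) : 0 ≤ (Om c θ)^2 + 4*c^2*(Real.sin (θ/2))^6 := by
  have : (Real.sin (θ/2))^6 = ((Real.sin (θ/2))^3)^2 := by ring
  rw [this]; positivity

lemma del_eq (c θ : ℝ) : Del c θ = Real.sqrt (Apoly c (Real.cos θ)) := by
  rw [Del, radicand_eq]

lemma del_sq (c θ : ℝ) : (Del c θ)^2 = Apoly c (Real.cos θ) := by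
  rw [Del, Real.sq_sqrt (radicand_nonneg c θ), radicand_eq]

section main

variable {c : ℝ}

lemma two_sub_pos (hc : c ∈ Set.Icc (-1 : ℝ) 1) : (0:ℝ) < 2 - c := by
  have := hc.2; linarith

lemma base_pos (hc : c ∈ Set.Icc (-1 : ℝ) 1) : (0:ℝ) < 16 - 8*c := by
  have := hc.2; linarith

/-- `cos − C6 = o(θ⁶)`. -/
lemma cos_sub_C6_isLittleO :
    (fun x : ℝ => Real.cos x - C6 x) =o[𝓝 0] fun x => x^6 := by
  have hbig : (fun x : ℝ => Real.cos x - C6 x) =O[𝓝 0] fun x => x^8 := by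
    rw [Asymptotics.isBigO_iff]
    refine ⟨1, ?_⟩
    have hev : ∀ᶠ x : ℝ in 𝓝 0, |x| ≤ 1 := by
      filter_upwards [Metric.ball_mem_nhds (0:ℝ) one_pos] with x hx
      have := Metric.mem_ball.mp hx
      rw [Real.dist_eq, sub_zero] at this
      exact this.le
    filter_upwards [hev] with x hx
    have := cos_taylor6 hx
    simpa [abs_pow] using this
  exact hbig.trans_isLittleO (Asymptotics.isLittleO_pow_pow (by norm_num : 6 < 8))

/-- `Apoly c (cos θ) − Apoly c (C6 θ) = o(θ⁶)`. -/
lemma apoly_diff_isLittleO :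
    (fun θ : ℝ => Apoly c (Real.cos θ) - Apoly c (C6 θ)) =o[𝓝 0] fun θ => θ^6 := by
  have hfac : ∀ a b : ℝ, Apoly c a - Apoly c b
      = (a - b) * ((((16-7*c)^2 - 2*c*(16-7*c) - 3*c^2)
        + (4*c^2 - 2*c*(16-7*c))*(a+b))/2) := by
    intro a b; unfold Apoly; ring
  have hcont : Continuous fun θ : ℝ => (((16-7*c)^2 - 2*c*(16-7*c) - 3*c^2)
      + (4*c^2 - 2*c*(16-7*c))*(Real.cos θ + C6 θ))/2 := by
    unfold C6; continuity
  have hO : (fun θ : ℝ => (((16-7*c)^2 - 2*c*(16-7*c) - 3*c^2)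
      + (4*c^2 - 2*c*(16-7*c))*(Real.cos θ + C6 θ))/2) =O[𝓝 0] fun _ => (1:ℝ) :=
    (hcont.tendsto 0).isBigO_one ℝ
  have := cos_sub_C6_isLittleO.mul_isBigO hO
  simp only [hfac]
  simpa using this

/-- `Apoly c (C6 θ) − (Ppoly c θ)² = θ⁸·Wpoly = o(θ⁶)`. -/
lemma poly_diff_isLittleO (hc : c ∈ Set.Icc (-1 : ℝ) 1) :
    (fun θ : ℝ => Apoly c (C6 θ) - (Ppoly c θ)^2) =o[𝓝 0] fun θ => θ^6 := by
  have h2c : (2:ℝ) - c ≠ 0 := ne_of_gt (two_sub_pos hc)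
  have hid : ∀ θ : ℝ, Apoly c (C6 θ) - (Ppoly c θ)^2 = θ^8 * Wpoly c θ := by
    intro θ
    unfold Apoly Ppoly Wpoly C6
    field_simp
    ring
  have hcont : Continuous fun θ : ℝ => Wpoly c θ := by
    unfold Wpoly; continuity
  have hO : (fun θ : ℝ => Wpoly c θ) =O[𝓝 0] fun _ => (1:ℝ) :=
    (hcont.tendsto 0).isBigO_one ℝ
  have h8 : (fun θ : ℝ => θ^8) =o[𝓝 0] fun θ => θ^6 :=
    Asymptotics.isLittleO_pow_pow (by norm_num : 6 < 8)
  have := h8.mul_isBigO hO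
  simp only [hid]
  simpa using this

/-- Limit of the denominator `Del + Ppoly`. -/
lemma denom_tendsto (hc : c ∈ Set.Icc (-1 : ℝ) 1) :
    Tendsto (fun θ : ℝ => Del c θ + Ppoly c θ) (𝓝 0) (𝓝 (2*(16 - 8*c))) := by
  have hcontD : Continuous fun θ : ℝ => Del c θ := by
    simp only [del_eq]
    apply Real.continuous_sqrt.comp
    unfold Apoly; continuity
  have hcontP : Continuous fun θ : ℝ => Ppoly c θ := by
    unfold Ppoly; continuity
  have h0 : Del c 0 + Ppoly c 0 = 2*(16 - 8*c) := by
    have hA : Apoly c (Real.cos 0) = (16 - 8*c)^2 := by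
      rw [Real.cos_zero]; unfold Apoly; ring
    have hD : Del c 0 = 16 - 8*c := by
      rw [del_eq, hA, Real.sqrt_sq (le_of_lt (base_pos hc))]
    rw [hD]; unfold Ppoly; ring
  have := (hcontD.add hcontP).tendsto 0
  simp only [Pi.add_apply] at this
  rwa [h0] at this

/-- `Del − Ppoly = o(θ⁶)`. -/
lemma del_sub_ppoly_isLittleO (hc : c ∈ Set.Icc (-1 : ℝ) 1) :
    (fun θ : ℝ => Del c θ - Ppoly c θ) =o[𝓝 0] fun θ => θ^6 := by
  have hAP : (fun θ : ℝ => Apoly c (Real.cos θ) - (Ppoly c θ)^2) =o[𝓝 0] fun θ => θ^6 := by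
    have := apoly_diff_isLittleO (c := c) |>.add (poly_diff_isLittleO hc)
    simpa using this
  have hne : (2*(16 - 8*c) : ℝ) ≠ 0 := by
    have := base_pos hc; positivity
  have hinv : Tendsto (fun θ : ℝ => (Del c θ + Ppoly c θ)⁻¹) (𝓝 0)
      (𝓝 ((2*(16 - 8*c))⁻¹)) := (denom_tendsto hc).inv₀ hne
  have hO : (fun θ : ℝ => (Del c θ + Ppoly c θ)⁻¹) =O[𝓝 0] fun _ => (1:ℝ) :=
    hinv.isBigO_one ℝ
  have hprod := hAP.mul_isBigO hO
  have hev : ∀ᶠ θ : ℝ in 𝓝 0,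
      (Apoly c (Real.cos θ) - (Ppoly c θ)^2) * (Del c θ + Ppoly c θ)⁻¹
        = Del c θ - Ppoly c θ := by
    filter_upwards [(denom_tendsto hc).eventually_ne hne] with θ hθ
    have hsq := del_sq c θ
    field_simp
    nlinarith [hsq]
  have : (fun θ : ℝ => Del c θ - Ppoly c θ) =o[𝓝 0]
      fun θ => θ^6 * 1 := Asymptotics.IsLittleO.congr' hprod hev (by rfl)
  simpa using this

/-- The core scalar limit. -/
lemma core_limit (hc : c ∈ Set.Icc (-1 : ℝ) 1) :
    Tendsto (fun θ : ℝ =>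
        ((2/3) * (-(15 + Real.cos θ) + (5 + 3*Real.cos θ)*c + Del c θ) + θ^2)/θ^6)
      (𝓝[≠] 0) (𝓝 ((4 + 13*c)/(2880*(2 - c)))) := by
  set L : ℝ := (4 + 13*c)/(2880*(2 - c)) with hL
  have h2c : (2:ℝ) - c ≠ 0 := ne_of_gt (two_sub_pos hc)
  have hid : ∀ θ : ℝ,
      (2/3) * (-(15 + Real.cos θ) + (5 + 3*Real.cos θ)*c + Del c θ) + θ^2 - L*θ^6
        = (2/3)*(3*c-1)*(Real.cos θ - C6 θ) + (2/3)*(Del c θ - Ppoly c θ) := by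
    intro θ
    have hpoly : (2/3) * (-(15 + C6 θ) + (5 + 3*C6 θ)*c + Ppoly c θ) + θ^2 - L*θ^6 = 0 := by
      rw [hL]; unfold C6 Ppoly
      field_simp
      ring
    linear_combination hpoly
  have hlo : (fun θ : ℝ =>
      (2/3) * (-(15 + Real.cos θ) + (5 + 3*Real.cos θ)*c + Del c θ) + θ^2 - L*θ^6)
      =o[𝓝 0] fun θ => θ^6 := by
    simp only [hid]
    exact ((cos_sub_C6_isLittleO.const_mul_left ((2/3)*(3*c-1))).add
      ((del_sub_ppoly_isLittleO hc).const_mul_left (2/3)))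
  have hdiv := hlo.tendsto_div_nhds_zero.mono_left
    (nhdsWithin_le_nhds : 𝓝[≠] (0:ℝ) ≤ 𝓝 0)
  have hadd : Tendsto (fun θ : ℝ =>
      ((2/3) * (-(15 + Real.cos θ) + (5 + 3*Real.cos θ)*c + Del c θ) + θ^2 - L*θ^6)/θ^6 + L)
      (𝓝[≠] 0) (𝓝 L) := by
    simpa using hdiv.add_const L
  refine hadd.congr' ?_
  filter_upwards [self_mem_nhdsWithin] with θ (hθ : θ ≠ 0)
  have h6 : θ^6 ≠ 0 := pow_ne_zero _ hθ
  field_simp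
  ring

end main

/-- Fourth-order expansion of the principal symbol: as `h → 0⁺`,
`(Q̂₁(hω; h) + ω²)/h⁴ → (4 + 13c)ω⁶/(2880(2 − c))`. -/
theorem Qhat1_fourth_order (c : ℝ) (hc : c ∈ Set.Icc (-1 : ℝ) 1) (ω : ℝ) :
    Tendsto (fun h : ℝ => (Qhat1 c h (h*ω) + ω^2)/h^4) (𝓝[>] 0)
      (𝓝 ((4 + 13*c)*ω^6/(2880*(2 - c)))) := by
  rcases eq_or_ne ω 0 with hω | hω
  · subst hω
    have hQ : ∀ h : ℝ, Qhat1 c h 0 = 0 := by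
      intro h
      have hD : Del c 0 = 16 - 8*c := by
        rw [del_eq]
        have hA : Apoly c (Real.cos 0) = (16 - 8*c)^2 := by
          rw [Real.cos_zero]; unfold Apoly; ring
        rw [hA, Real.sqrt_sq (le_of_lt (base_pos hc))]
      unfold Qhat1
      rw [hD, Real.cos_zero]
      ring
    have : (fun h : ℝ => (Qhat1 c h (h*0) + (0:ℝ)^2)/h^4) = fun _ => (0:ℝ) := by
      funext h; rw [mul_zero, hQ]; ring
    rw [this]
    have : (4 + 13*c)*(0:ℝ)^6/(2880*(2 - c)) = 0 := by ring
    rw [this]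
    exact tendsto_const_nhds
  · have hmap : Tendsto (fun h : ℝ => h*ω) (𝓝[>] 0) (𝓝[≠] 0) := by
      rw [tendsto_nhdsWithin_iff]
      constructor
      · have : Tendsto (fun h : ℝ => h*ω) (𝓝 0) (𝓝 (0*ω)) :=
          (continuous_id.mul continuous_const).tendsto 0
        rw [zero_mul] at this
        exact this.mono_left nhdsWithin_le_nhds
      · filter_upwards [self_mem_nhdsWithin] with h (hh : 0 < h)
        exact mul_ne_zero (ne_of_gt hh) hω
    have hcomp := (core_limit hc).comp hmap
    have hmul := hcomp.mul_const (ω^6)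
    have hfinal : (4 + 13*c)/(2880*(2 - c)) * ω^6 = (4 + 13*c)*ω^6/(2880*(2 - c)) := by
      ring
    rw [hfinal] at hmul
    refine hmul.congr' ?_
    filter_upwards [self_mem_nhdsWithin] with h (hh : 0 < h)
    have hh0 : h ≠ 0 := ne_of_gt hh
    show ((2/3) * (-(15 + Real.cos (h*ω)) + (5 + 3*Real.cos (h*ω))*c + Del c (h*ω))
        + (h*ω)^2)/(h*ω)^6 * ω^6 = (Qhat1 c h (h*ω) + ω^2)/h^4
    unfold Qhat1
    field_simp
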